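/- arXiv:2208.08365 — 2 statements merged into one kernel-verified Lean document; each statement's English description precedes it below -/
import Mathlib

section
/- Let k be an algebraically closed field of characteristic zero, A ∈ k[[z]] of order n ≥ 2, and F ∈ k[[z]] of order nm with m ≥ 1. Then the equation F = X ∘ A has a solution X ∈ k[[z]] of order m if and only if G_A ⊆ G_F, where G_P denotes the group of order-1 series φ with P ∘ φ = P. -/
open PowerSeries

/-- Composition (substitution) `comp A B = A ∘ B` of formal power series,
the standard coefficient formula, well-behaved when `B` has zero constant term. -/
noncomputable def comp {k : Type*} [Field k] (A B : PowerSeries k) : PowerSeries k :=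
  PowerSeries.mk fun n =>
    ∑ i ∈ Finset.range (n + 1), (PowerSeries.coeff i A) * (PowerSeries.coeff n (B ^ i))

/-- `iterComp φ j` is the `j`-fold compositional iterate `φ^{∘j}` (with `φ^{∘0} = z`). -/
noncomputable def iterComp {k : Type*} [Field k] (φ : PowerSeries k) : ℕ → PowerSeries k
  | 0 => PowerSeries.X
  | n + 1 => comp φ (iterComp φ n)

/-- Composition of a list of power series: `compList [A₁, …, A_r] = A₁ ∘ ⋯ ∘ A_r`. -/
noncomputable def compList {k : Type*} [Field k] : List (PowerSeries k) → PowerSeries k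
  | [] => PowerSeries.X
  | a :: t => comp a (compList t)

namespace StmtAux

open Finset

variable {k : Type*} [Field k]

lemma coeff_comp (A B : PowerSeries k) (n : ℕ) :
    coeff n (comp A B) = ∑ i ∈ range (n + 1), coeff i A * coeff n (B ^ i) := by
  simp [comp]

lemma coeff_pow_lt {B : PowerSeries k} {b : ℕ} (hB : ∀ v < b, coeff v B = 0) :
    ∀ (i : ℕ) {j : ℕ}, j < i * b → coeff j (B ^ i) = 0 := by
  intro i
  induction i with
  | zero => intro j hj; simp at hj
  | succ i ih =>
    intro j hj
    rw [Nat.succ_mul] at hj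
    rw [pow_succ, PowerSeries.coeff_mul]
    apply Finset.sum_eq_zero
    intro p hp
    rw [Finset.HasAntidiagonal.mem_antidiagonal] at hp
    by_cases h1 : p.1 < i * b
    · rw [ih h1, zero_mul]
    · rw [hB p.2 (by omega), mul_zero]

lemma coeff_pow_base {B : PowerSeries k} {b : ℕ} (hB : ∀ v < b, coeff v B = 0) (i : ℕ) :
    coeff (i * b) (B ^ i) = (coeff b B) ^ i := by
  induction i with
  | zero => simp
  | succ i ih =>
    rw [pow_succ, PowerSeries.coeff_mul]
    rw [Finset.sum_eq_single (i * b, b)]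
    · rw [ih, pow_succ]
    · intro p hp hne
      rw [Finset.HasAntidiagonal.mem_antidiagonal, Nat.succ_mul] at hp
      by_cases h1 : p.1 < i * b
      · rw [coeff_pow_lt hB i h1, zero_mul]
      · by_cases h2 : p.2 < b
        · rw [hB _ h2, mul_zero]
        · exact absurd (Prod.ext (by omega) (by omega)) hne
    · intro h
      exact absurd (Finset.HasAntidiagonal.mem_antidiagonal.mpr (Nat.succ_mul i b).symm) h

lemma coeff_pow_lt' {B : PowerSeries k} (hB : constantCoeff B = 0) {i j : ℕ} (h : j < i) :
    coeff j (B ^ i) = 0 := by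
  have h0 : ∀ v < 1, coeff v B = 0 := by
    intro v hv
    interval_cases v
    simpa using hB
  exact coeff_pow_lt h0 i (by omega)

lemma coeff_pow_base' {B : PowerSeries k} (hB : constantCoeff B = 0) (i : ℕ) :
    coeff i (B ^ i) = (coeff 1 B) ^ i := by
  have h0 : ∀ v < 1, coeff v B = 0 := by
    intro v hv
    interval_cases v
    simpa using hB
  simpa using coeff_pow_base h0 i

lemma coeff_aeval {B : PowerSeries k} (hB : constantCoeff B = 0) (p : Polynomial k) (n : ℕ) :
    coeff n (Polynomial.aeval B p) = ∑ i ∈ range (n + 1), p.coeff i * coeff n (B ^ i) := by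
  rw [Polynomial.aeval_eq_sum_range' (n := max (p.natDegree + 1) (n + 1))
    (lt_of_lt_of_le (Nat.lt_succ_self _) (le_max_left _ _)), map_sum]
  rw [← Finset.sum_subset (Finset.range_subset_range.mpr (le_max_right (p.natDegree + 1) (n + 1)))]
  · exact Finset.sum_congr rfl fun i _ => by rw [LinearMap.map_smul, smul_eq_mul]
  · intro i _ hi
    rw [Finset.mem_range, not_lt] at hi
    rw [LinearMap.map_smul, smul_eq_mul, coeff_pow_lt' hB (by omega), mul_zero]

lemma coeff_comp_eq_aeval {B : PowerSeries k} (hB : constantCoeff B = 0) {A : PowerSeries k}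
    {n : ℕ} {p : Polynomial k} (hp : ∀ i ≤ n, p.coeff i = coeff i A) :
    coeff n (comp A B) = coeff n (Polynomial.aeval B p) := by
  rw [coeff_comp, coeff_aeval hB]
  exact Finset.sum_congr rfl fun i hi => by
    rw [hp i (by simpa using Nat.lt_succ_iff.mp (Finset.mem_range.mp hi))]

lemma coeff_trunc_eq {A : PowerSeries k} {n i : ℕ} (h : i ≤ n) :
    (PowerSeries.trunc (n + 1) A).coeff i = coeff i A := by
  rw [PowerSeries.coeff_trunc, if_pos (by omega)]

lemma comp_add (A₁ A₂ B : PowerSeries k) :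
    comp (A₁ + A₂) B = comp A₁ B + comp A₂ B := by
  ext n
  simp [coeff_comp, add_mul, Finset.sum_add_distrib]

lemma comp_C (c : k) (B : PowerSeries k) : comp (PowerSeries.C c) B = PowerSeries.C c := by
  ext n
  rw [coeff_comp, Finset.sum_eq_single 0]
  · simp [PowerSeries.coeff_C, PowerSeries.coeff_one]
  · intro i _ hne
    rw [PowerSeries.coeff_C, if_neg hne, zero_mul]
  · intro h; exact absurd (Finset.mem_range.mpr (by omega)) h

lemma comp_one (B : PowerSeries k) : comp 1 B = 1 := by
  simpa [map_one] using comp_C (1 : k) B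

lemma comp_mul {B : PowerSeries k} (hB : constantCoeff B = 0) (A₁ A₂ : PowerSeries k) :
    comp (A₁ * A₂) B = comp A₁ B * comp A₂ B := by
  ext n
  set p := PowerSeries.trunc (n + 1) A₁ with hp
  set q := PowerSeries.trunc (n + 1) A₂ with hq
  have hpc : ∀ i ≤ n, p.coeff i = coeff i A₁ := fun i hi => coeff_trunc_eq hi
  have hqc : ∀ i ≤ n, q.coeff i = coeff i A₂ := fun i hi => coeff_trunc_eq hi
  have h1 : coeff n (comp (A₁ * A₂) B) = coeff n (Polynomial.aeval B (p * q)) := by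
    apply coeff_comp_eq_aeval hB
    intro i hi
    rw [Polynomial.coeff_mul, PowerSeries.coeff_mul]
    apply Finset.sum_congr rfl
    intro x hx
    rw [Finset.HasAntidiagonal.mem_antidiagonal] at hx
    rw [hpc x.1 (by omega), hqc x.2 (by omega)]
  rw [h1, map_mul, PowerSeries.coeff_mul, PowerSeries.coeff_mul]
  apply Finset.sum_congr rfl
  intro x hx
  rw [Finset.HasAntidiagonal.mem_antidiagonal] at hx
  rw [coeff_comp_eq_aeval hB (p := p) (fun i hi => hpc i (by omega)),
      coeff_comp_eq_aeval hB (p := q) (fun i hi => hqc i (by omega))]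

lemma comp_pow {B : PowerSeries k} (hB : constantCoeff B = 0) (A : PowerSeries k) (i : ℕ) :
    comp (A ^ i) B = (comp A B) ^ i := by
  induction i with
  | zero => simpa using comp_one B
  | succ i ih => rw [pow_succ, comp_mul hB, ih, pow_succ]

lemma comp_X_right (A : PowerSeries k) : comp A PowerSeries.X = A := by
  ext n
  rw [coeff_comp, Finset.sum_eq_single n]
  · rw [← pow_one (PowerSeries.X (R := k)), ← pow_mul, PowerSeries.coeff_X_pow, if_pos (by omega), mul_one]
  · intro i _ hne
    rw [← pow_one (PowerSeries.X (R := k)), ← pow_mul, PowerSeries.coeff_X_pow,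
      if_neg (by omega), mul_zero]
  · intro h; exact absurd (Finset.mem_range.mpr (by omega)) h

lemma comp_X_left {B : PowerSeries k} (hB : constantCoeff B = 0) :
    comp PowerSeries.X B = B := by
  ext n
  rcases Nat.eq_zero_or_pos n with rfl | hn
  · rw [coeff_comp]
    simp [PowerSeries.coeff_zero_eq_constantCoeff, hB]
  · rw [coeff_comp, Finset.sum_eq_single 1]
    · simp
    · intro i _ hne
      rw [PowerSeries.coeff_X, if_neg hne, zero_mul]
    · intro h; exact absurd (Finset.mem_range.mpr (by omega)) h

lemma constantCoeff_comp (A B : PowerSeries k) :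
    constantCoeff (comp A B) = constantCoeff A := by
  have := coeff_comp A B 0
  simp only [zero_add, Finset.range_one, Finset.sum_singleton, pow_zero, PowerSeries.coeff_one] at this
  rw [← PowerSeries.coeff_zero_eq_constantCoeff, this]
  simp

lemma comp_aeval {C : PowerSeries k} (hC : constantCoeff C = 0) (B : PowerSeries k)
    (p : Polynomial k) :
    comp (Polynomial.aeval B p) C = Polynomial.aeval (comp B C) p := by
  induction p using Polynomial.induction_on' with
  | add p q hp hq => rw [map_add, comp_add, hp, hq, map_add]
  | monomial i a =>
    rw [Polynomial.aeval_monomial, Polynomial.aeval_monomial]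
    rw [PowerSeries.algebraMap_apply, Algebra.algebraMap_self, RingHom.id_apply,
      comp_mul hC, comp_pow hC, comp_C]

lemma comp_assoc {B C : PowerSeries k} (hB : constantCoeff B = 0)
    (hC : constantCoeff C = 0) (A : PowerSeries k) :
    comp (comp A B) C = comp A (comp B C) := by
  ext N
  set p := PowerSeries.trunc (N + 1) A with hp
  have hpc : ∀ i ≤ N, p.coeff i = coeff i A := fun i hi => coeff_trunc_eq hi
  have hBC : constantCoeff (comp B C) = 0 := by rw [constantCoeff_comp, hB]
  have step1 : coeff N (comp (comp A B) C) = coeff N (comp (Polynomial.aeval B p) C) := by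
    rw [coeff_comp, coeff_comp]
    apply Finset.sum_congr rfl
    intro i hi
    rw [coeff_comp_eq_aeval hB (fun u hu => hpc u (le_trans hu (by simpa using Nat.lt_succ_iff.mp (Finset.mem_range.mp hi))))]
  rw [step1, comp_aeval hC,
    coeff_comp_eq_aeval hBC (A := A) (p := p) hpc]

-- order of composition
lemma comp_order_aux {A B : PowerSeries k} {a b : ℕ} (hb : 1 ≤ b)
    (ha1 : ∀ j < a, coeff j A = 0) (hb1 : ∀ j < b, coeff j B = 0) :
    (∀ j < a * b, coeff j (comp A B) = 0) ∧
      coeff (a * b) (comp A B) = coeff a A * (coeff b B) ^ a := by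
  constructor
  · intro j hj
    rw [coeff_comp]
    apply Finset.sum_eq_zero
    intro i hi
    by_cases h1 : i < a
    · rw [ha1 i h1, zero_mul]
    · rw [coeff_pow_lt hb1 i (lt_of_lt_of_le hj (Nat.mul_le_mul_right b (by omega))), mul_zero]
  · rw [coeff_comp, Finset.sum_eq_single a]
    · rw [coeff_pow_base hb1]
    · intro i _ hne
      by_cases h1 : i < a
      · rw [ha1 i h1, zero_mul]
      · rw [coeff_pow_lt hb1 i (by
          have h3 := Nat.mul_le_mul_right b (show a + 1 ≤ i by omega)
          rw [add_one_mul] at h3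
          omega), mul_zero]
    · intro h
      exact absurd (Finset.mem_range.mpr (by nlinarith)) h

lemma order_comp {A B : PowerSeries k} {a b : ℕ} (hb : 1 ≤ b)
    (hA : A.order = (a : ℕ∞)) (hB : B.order = (b : ℕ∞)) :
    (comp A B).order = ((a * b : ℕ) : ℕ∞) := by
  rw [PowerSeries.order_eq_nat] at hA hB ⊢
  obtain ⟨hA2, hA1⟩ := hA
  obtain ⟨hB2, hB1⟩ := hB
  obtain ⟨h1, h2⟩ := comp_order_aux hb hA1 hB1
  exact ⟨by rw [h2]; exact mul_ne_zero hA2 (pow_ne_zero _ hB2), h1⟩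

-- composition with a linear series
lemma coeff_comp_linear (A : PowerSeries k) (c : k) (n : ℕ) :
    coeff n (comp A (PowerSeries.C c * PowerSeries.X)) = coeff n A * c ^ n := by
  rw [coeff_comp, Finset.sum_eq_single n]
  · rw [mul_pow, ← map_pow, PowerSeries.coeff_C_mul, PowerSeries.coeff_X_pow, if_pos rfl, mul_one]
  · intro i _ hne
    rw [mul_pow, ← map_pow, PowerSeries.coeff_C_mul, PowerSeries.coeff_X_pow,
      if_neg (fun h => hne h.symm), mul_zero, mul_zero]
  · intro h; exact absurd (Finset.mem_range.mpr (by omega)) h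

noncomputable def invCoeff (B : PowerSeries k) : ℕ → k
  | j => ((if j = 1 then (1 : k) else 0) -
      ∑ i ∈ (Finset.range j).attach, invCoeff B i * coeff j (B ^ (i : ℕ))) /
      (coeff 1 B) ^ j
  decreasing_by exact Finset.mem_range.mp i.2

lemma invCoeff_eq (B : PowerSeries k) (j : ℕ) :
    invCoeff B j = ((if j = 1 then (1 : k) else 0) -
      ∑ i ∈ Finset.range j, invCoeff B i * coeff j (B ^ i)) / (coeff 1 B) ^ j := by
  rw [invCoeff]
  congr 2
  exact Finset.sum_attach (Finset.range j) (fun i => invCoeff B i * coeff j (B ^ i))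

noncomputable def compInv (B : PowerSeries k) : PowerSeries k :=
  PowerSeries.mk (invCoeff B)

lemma constantCoeff_compInv (B : PowerSeries k) : constantCoeff (compInv B) = 0 := by
  rw [← PowerSeries.coeff_zero_eq_constantCoeff, compInv, PowerSeries.coeff_mk, invCoeff_eq]
  simp

lemma coeff_one_compInv (B : PowerSeries k) : coeff 1 (compInv B) = (coeff 1 B)⁻¹ := by
  rw [compInv, PowerSeries.coeff_mk, invCoeff_eq]
  simp [PowerSeries.coeff_one, one_div]

lemma comp_compInv {B : PowerSeries k} (hB0 : constantCoeff B = 0)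
    (hB1 : coeff 1 B ≠ 0) : comp (compInv B) B = PowerSeries.X := by
  ext j
  rw [coeff_comp, Finset.sum_range_succ]
  have hc : ∀ i, coeff i (compInv B) = invCoeff B i := fun i => PowerSeries.coeff_mk _ _
  simp only [hc]
  rw [coeff_pow_base' hB0, invCoeff_eq, div_mul_cancel₀ _ (pow_ne_zero j hB1)]
  rw [PowerSeries.coeff_X]
  ring

lemma compInv_comp {B : PowerSeries k} (hB0 : constantCoeff B = 0)
    (hB1 : coeff 1 B ≠ 0) : comp B (compInv B) = PowerSeries.X := by
  have hB'0 : constantCoeff (compInv B) = 0 := constantCoeff_compInv B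
  have hB'1 : coeff 1 (compInv B) ≠ 0 := by
    rw [coeff_one_compInv]; exact inv_ne_zero hB1
  have h2 : comp (compInv (compInv B)) (compInv B) = PowerSeries.X :=
    comp_compInv hB'0 hB'1
  have key : compInv (compInv B) = B := by
    have := congrArg (fun Z => comp Z B) h2
    beta_reduce at this
    rw [comp_assoc hB'0 hB0, comp_compInv hB0 hB1, comp_X_right, comp_X_left hB0] at this
    exact this
  rw [key] at h2
  exact h2

-- Lemma D
lemma coeff_add_pow {P R : PowerSeries k} {j : ℕ} (hR : ∀ i ≤ j, coeff i R = 0) (n : ℕ) :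
    (∀ i ≤ j, coeff i ((P + R) ^ n) = coeff i (P ^ n)) ∧
      coeff (j + 1) ((P + R) ^ n) =
        coeff (j + 1) (P ^ n) + n * (constantCoeff P) ^ (n - 1) * coeff (j + 1) R := by
  induction n with
  | zero => simp
  | succ n ih =>
    obtain ⟨ih1, ih2⟩ := ih
    have e0 : coeff 0 ((P + R) ^ n) = (constantCoeff P) ^ n := by
      rw [ih1 0 (Nat.zero_le j)]
      simp [PowerSeries.coeff_zero_eq_constantCoeff]
    have expand : (P + R) ^ (n + 1) = (P + R) ^ n * P + (P + R) ^ n * R := by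
      rw [pow_succ, mul_add]
    constructor
    · intro i hi
      rw [expand, map_add]
      have t2 : coeff i ((P + R) ^ n * R) = 0 := by
        rw [PowerSeries.coeff_mul]
        apply Finset.sum_eq_zero
        intro p hp
        rw [Finset.HasAntidiagonal.mem_antidiagonal] at hp
        rw [hR p.2 (by omega), mul_zero]
      have t1 : coeff i ((P + R) ^ n * P) = coeff i (P ^ n * P) := by
        rw [PowerSeries.coeff_mul, PowerSeries.coeff_mul]
        apply Finset.sum_congr rfl
        intro p hp
        rw [Finset.HasAntidiagonal.mem_antidiagonal] at hp
        rw [ih1 p.1 (by omega)]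
      rw [t1, t2, add_zero, ← pow_succ]
    · rw [expand, map_add]
      have t2 : coeff (j + 1) ((P + R) ^ n * R) =
          (constantCoeff P) ^ n * coeff (j + 1) R := by
        rw [PowerSeries.coeff_mul, Finset.sum_eq_single (0, j + 1)]
        · rw [← e0]
        · intro p hp hne
          rw [Finset.HasAntidiagonal.mem_antidiagonal] at hp
          have : p.2 ≤ j := by
            rcases Nat.lt_or_ge p.2 (j + 1) with h | h
            · omega
            · exfalso; exact hne (Prod.ext (by omega) (by omega))
          rw [hR p.2 this, mul_zero]
        · intro h; exact absurd (Finset.HasAntidiagonal.mem_antidiagonal.mpr (by omega)) h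
      have t1 : coeff (j + 1) ((P + R) ^ n * P) =
          coeff (j + 1) (P ^ n * P) +
            n * (constantCoeff P) ^ (n - 1) * coeff (j + 1) R * constantCoeff P := by
        rw [PowerSeries.coeff_mul, PowerSeries.coeff_mul]
        have congr1 : ∀ p ∈ Finset.HasAntidiagonal.antidiagonal (j + 1),
            coeff p.1 ((P + R) ^ n) * coeff p.2 P =
              coeff p.1 (P ^ n) * coeff p.2 P +
                (if p = (j + 1, 0) then
                  n * (constantCoeff P) ^ (n - 1) * coeff (j + 1) R * constantCoeff P
                  else 0) := by
          intro p hp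
          rw [Finset.HasAntidiagonal.mem_antidiagonal] at hp
          by_cases hcase : p = (j + 1, 0)
          · subst hcase
            rw [if_pos rfl, ih2]
            simp only [PowerSeries.coeff_zero_eq_constantCoeff]
            ring
          · have hp1 : p.1 ≤ j := by
              rcases Nat.lt_or_ge p.1 (j + 1) with h | h
              · omega
              · exfalso; exact hcase (Prod.ext (by omega) (by omega))
            rw [if_neg hcase, ih1 p.1 hp1, add_zero]
        rw [Finset.sum_congr rfl congr1, Finset.sum_add_distrib,
          Finset.sum_ite_eq' (Finset.HasAntidiagonal.antidiagonal (j + 1)) ((j + 1, 0) : ℕ × ℕ),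
          if_pos (Finset.HasAntidiagonal.mem_antidiagonal.mpr (by omega))]
      rw [t1, t2, ← pow_succ]
      simp only [Nat.add_sub_cancel]
      rcases Nat.eq_zero_or_pos n with rfl | hn
      · push_cast; ring
      · have hpow : (constantCoeff P) ^ (n - 1) * constantCoeff P =
            (constantCoeff P) ^ n := by
          rw [← pow_succ]
          congr 1
          omega
        push_cast
        linear_combination ((n : k) * coeff (j + 1) R) * hpow

noncomputable def rootCoeff (U : PowerSeries k) (n : ℕ) : ℕ → k
  | 0 => 1
  | (j + 1) => (coeff (j + 1) U - coeff (j + 1)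
      ((∑ i ∈ (Finset.range (j + 1)).attach, PowerSeries.C (rootCoeff U n i) *
        PowerSeries.X ^ (i : ℕ)) ^ n)) / n
  decreasing_by exact Finset.mem_range.mp i.2

lemma rootCoeff_zero (U : PowerSeries k) (n : ℕ) : rootCoeff U n 0 = 1 := by
  rw [rootCoeff]

lemma rootCoeff_succ (U : PowerSeries k) (n j : ℕ) :
    rootCoeff U n (j + 1) = (coeff (j + 1) U - coeff (j + 1)
      ((∑ i ∈ Finset.range (j + 1), PowerSeries.C (rootCoeff U n i) *
        PowerSeries.X ^ i) ^ n)) / n := by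
  rw [rootCoeff]
  congr 4
  exact Finset.sum_attach (Finset.range (j + 1))
    (fun i => PowerSeries.C (rootCoeff U n i) * PowerSeries.X ^ i)

lemma coeff_polysum (f : ℕ → k) (N i : ℕ) :
    coeff i (∑ t ∈ Finset.range N, PowerSeries.C (f t) * PowerSeries.X ^ t) =
      if i < N then f i else 0 := by
  rw [map_sum]
  by_cases h : i < N
  · rw [Finset.sum_eq_single i]
    · rw [PowerSeries.coeff_C_mul, PowerSeries.coeff_X_pow, if_pos rfl, mul_one, if_pos h]
    · intro t _ hne
      rw [PowerSeries.coeff_C_mul, PowerSeries.coeff_X_pow, if_neg (fun hh => hne hh.symm),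
        mul_zero]
    · intro hh; exact absurd (Finset.mem_range.mpr h) hh
  · rw [if_neg h]
    apply Finset.sum_eq_zero
    intro t ht
    rw [Finset.mem_range] at ht
    rw [PowerSeries.coeff_C_mul, PowerSeries.coeff_X_pow, if_neg (by omega), mul_zero]

lemma pow_root {U : PowerSeries k} (hU : constantCoeff U = 1) {n : ℕ}
    (hn : (n : k) ≠ 0) : (PowerSeries.mk (rootCoeff U n)) ^ n = U := by
  set V := PowerSeries.mk (rootCoeff U n) with hV
  have hVc : ∀ i, coeff i V = rootCoeff U n i := fun i => PowerSeries.coeff_mk _ _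
  ext j
  rcases j with _ | j
  · rw [← PowerSeries.coeff_zero_eq_constantCoeff] at hU
    have : coeff 0 V = 1 := by rw [hVc, rootCoeff_zero]
    rw [PowerSeries.coeff_zero_eq_constantCoeff] at this ⊢
    rw [map_pow, this, one_pow, ← PowerSeries.coeff_zero_eq_constantCoeff, hU]
  · set P := ∑ i ∈ Finset.range (j + 1), PowerSeries.C (rootCoeff U n i) *
      PowerSeries.X ^ i with hP
    set R := V - P with hR
    have hPc : ∀ i, coeff i P = if i < j + 1 then rootCoeff U n i else 0 :=
      fun i => coeff_polysum _ _ _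
    have hRlow : ∀ i ≤ j, coeff i R = 0 := by
      intro i hi
      rw [hR, map_sub, hVc, hPc, if_pos (by omega), sub_self]
    have hVPR : V = P + R := by rw [hR]; ring
    have hD := (coeff_add_pow (P := P) hRlow n).2
    have hP0 : constantCoeff P = 1 := by
      rw [← PowerSeries.coeff_zero_eq_constantCoeff, hPc, if_pos (by omega), rootCoeff_zero]
    have hRtop : coeff (j + 1) R = rootCoeff U n (j + 1) := by
      rw [hR, map_sub, hVc, hPc, if_neg (by omega), sub_zero]
    rw [hVPR, hD, hP0, one_pow, mul_one, hRtop, rootCoeff_succ, ← hP,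
      mul_div_cancel₀ _ hn]
    ring

variable [IsAlgClosed k] [CharZero k]

lemma exists_root {A : PowerSeries k} {n : ℕ} (hn : 1 ≤ n) (hA : A.order = (n : ℕ∞)) :
    ∃ B : PowerSeries k, constantCoeff B = 0 ∧ coeff 1 B ≠ 0 ∧
      B.order = ((1 : ℕ) : ℕ∞) ∧ B ^ n = A := by
  rw [PowerSeries.order_eq_nat] at hA
  obtain ⟨hA2, hA1⟩ := hA
  set u := coeff n A with hu_def
  have hu : u ≠ 0 := hA2
  set U : PowerSeries k := PowerSeries.mk fun i => coeff (n + i) A with hU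
  have hXU : A = PowerSeries.X ^ n * U := by
    ext j
    rw [PowerSeries.coeff_X_pow_mul']
    by_cases h : n ≤ j
    · rw [if_pos h, hU, PowerSeries.coeff_mk]
      show coeff j A = coeff (n + (j - n)) A
      have harith : n + (j - n) = j := by omega
      rw [harith]
    · rw [if_neg h]
      exact hA1 j (by omega)
  have hU0 : constantCoeff U = u := by
    rw [← PowerSeries.coeff_zero_eq_constantCoeff, hU, PowerSeries.coeff_mk, hu_def]
    norm_num
  obtain ⟨c, hc⟩ := IsAlgClosed.exists_pow_nat_eq u (show 0 < n by omega)
  have hc0 : c ≠ 0 := by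
    intro h
    rw [h, zero_pow (by omega)] at hc
    exact hu hc.symm
  have hnk : (n : k) ≠ 0 := Nat.cast_ne_zero.mpr (by omega)
  set U₁ : PowerSeries k := PowerSeries.C u⁻¹ * U with hU₁def
  have hU₁ : constantCoeff U₁ = 1 := by
    rw [hU₁def, map_mul, PowerSeries.constantCoeff_C, hU0, inv_mul_cancel₀ hu]
  set V := PowerSeries.mk (rootCoeff U₁ n) with hVdef
  have hVn : V ^ n = U₁ := pow_root hU₁ hnk
  have hV0 : constantCoeff V = 1 := by
    rw [hVdef, ← PowerSeries.coeff_zero_eq_constantCoeff, PowerSeries.coeff_mk,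
      rootCoeff_zero]
  refine ⟨PowerSeries.C c * (PowerSeries.X * V), ?_, ?_, ?_, ?_⟩
  · simp
  · rw [PowerSeries.coeff_C_mul, PowerSeries.coeff_succ_X_mul,
      PowerSeries.coeff_zero_eq_constantCoeff, hV0, mul_one]
    exact hc0
  · rw [PowerSeries.order_eq_nat]
    constructor
    · rw [PowerSeries.coeff_C_mul, PowerSeries.coeff_succ_X_mul,
        PowerSeries.coeff_zero_eq_constantCoeff, hV0, mul_one]
      exact hc0
    · intro i hi
      interval_cases i
      simp
  · have expand : (PowerSeries.C c * (PowerSeries.X * V)) ^ n =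
        PowerSeries.C (c ^ n) * (PowerSeries.X ^ n * V ^ n) := by
      rw [mul_pow, mul_pow, map_pow]
    rw [expand, hc, hVn, hU₁def, hXU]
    have : PowerSeries.C u * (PowerSeries.X ^ n * (PowerSeries.C u⁻¹ * U)) =
        (PowerSeries.C u * PowerSeries.C u⁻¹) * (PowerSeries.X ^ n * U) := by ring
    rw [this, ← map_mul, mul_inv_cancel₀ hu, map_one, one_mul]


end StmtAux

open StmtAux Finset in
theorem stmt10 {k : Type*} [Field k] [IsAlgClosed k] [CharZero k]
    {n m : ℕ} (hn : 2 ≤ n) (hm : 1 ≤ m)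
    (A F : PowerSeries k) (hA : A.order = (n : ℕ∞)) (hF : F.order = ((n * m : ℕ) : ℕ∞)) :
    (∃ Xs : PowerSeries k, Xs.order = (m : ℕ∞) ∧ F = comp Xs A) ↔
      ∀ φ : PowerSeries k, φ.order = 1 → comp A φ = A → comp F φ = F := by
  have hA0 : constantCoeff A = 0 := by
    rw [← PowerSeries.coeff_zero_eq_constantCoeff]
    apply PowerSeries.coeff_of_lt_order
    rw [hA]
    exact_mod_cast (by omega : 0 < n)
  constructor
  · rintro ⟨Xs, _, rfl⟩ φ hφor hφA
    have hφ0 : constantCoeff φ = 0 := by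
      rw [← PowerSeries.coeff_zero_eq_constantCoeff]
      apply PowerSeries.coeff_of_lt_order
      rw [hφor]
      exact_mod_cast zero_lt_one
    rw [comp_assoc hA0 hφ0, hφA]
  · intro h
    -- the n-th root B of A
    obtain ⟨B, hB0, hB1, hBor, hBn⟩ := exists_root (by omega) hA
    have hAcomp : comp (PowerSeries.X ^ n) B = A := by
      rw [comp_pow hB0, comp_X_left hB0, hBn]
    set B' := compInv B with hB'def
    have hB'0 : constantCoeff B' = 0 := constantCoeff_compInv B
    have hB'1 : coeff 1 B' ≠ 0 := by
      rw [hB'def, coeff_one_compInv]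
      exact inv_ne_zero hB1
    have hB'B : comp B' B = PowerSeries.X := comp_compInv hB0 hB1
    have hBB' : comp B B' = PowerSeries.X := compInv_comp hB0 hB1
    have hB'or : B'.order = ((1 : ℕ) : ℕ∞) := by
      rw [PowerSeries.order_eq_nat]
      refine ⟨hB'1, ?_⟩
      intro i hi
      interval_cases i
      rw [PowerSeries.coeff_zero_eq_constantCoeff]
      exact hB'0
    set G := comp F B' with hGdef
    -- invariance of G under multiplication of the variable by n-th roots of unity
    have hGinv : ∀ ζ : k, ζ ^ n = 1 → ∀ j : ℕ, coeff j G * ζ ^ j = coeff j G := by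
      intro ζ hζ j
      have hζ0 : ζ ≠ 0 := by
        intro hz
        rw [hz, zero_pow (by omega)] at hζ
        exact one_ne_zero hζ.symm
      set L := PowerSeries.C ζ * PowerSeries.X with hLdef
      have hL0 : constantCoeff L = 0 := by simp [hLdef]
      have hL1 : coeff 1 L = ζ := by simp [hLdef]
      have hLor : L.order = ((1 : ℕ) : ℕ∞) := by
        rw [PowerSeries.order_eq_nat]
        refine ⟨by rw [hL1]; exact hζ0, ?_⟩
        intro i hi
        interval_cases i
        rw [PowerSeries.coeff_zero_eq_constantCoeff]
        exact hL0
      have hLn : L ^ n = PowerSeries.X ^ n := by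
        rw [hLdef, mul_pow, ← map_pow, hζ, map_one, one_mul]
      set ψ := comp (comp B' L) B with hψdef
      have hB'L0 : constantCoeff (comp B' L) = 0 := by
        rw [constantCoeff_comp, hB'0]
      have hψ0 : constantCoeff ψ = 0 := by
        rw [hψdef, constantCoeff_comp, hB'L0]
      have hψor : ψ.order = 1 := by
        have h1 : (comp B' L).order = ((1 * 1 : ℕ) : ℕ∞) := order_comp le_rfl hB'or hLor
        have h2 : ψ.order = (((1 * 1) * 1 : ℕ) : ℕ∞) := order_comp le_rfl h1 hBor
        rw [h2]
        norm_num
      have hAψ : comp A ψ = A := by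
        have step1 : comp B ψ = comp L B := by
          rw [hψdef, ← comp_assoc hB'L0 hB0, ← comp_assoc hB'0 hL0, hBB', comp_X_left hL0]
        calc comp A ψ = comp (comp (PowerSeries.X ^ n) B) ψ := by rw [hAcomp]
          _ = comp (PowerSeries.X ^ n) (comp B ψ) := comp_assoc hB0 hψ0 _
          _ = comp (PowerSeries.X ^ n) (comp L B) := by rw [step1]
          _ = (comp PowerSeries.X (comp L B)) ^ n := by
              rw [comp_pow (by rw [constantCoeff_comp, hL0])]
          _ = (comp L B) ^ n := by rw [comp_X_left (by rw [constantCoeff_comp, hL0])]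
          _ = comp (L ^ n) B := (comp_pow hB0 L n).symm
          _ = comp (PowerSeries.X ^ n) B := by rw [hLn]
          _ = A := hAcomp
      have hFψ : comp F ψ = F := h ψ hψor hAψ
      have hGL : comp G L = G := by
        have e1 : comp F ψ = comp (comp F (comp B' L)) B := by
          rw [hψdef, ← comp_assoc hB'L0 hB0 F]
        have e2 : comp (comp F (comp B' L)) B = F := by rw [← e1, hFψ]
        have e3 : comp F (comp B' L) = comp F B' := by
          calc comp F (comp B' L) = comp (comp F (comp B' L)) PowerSeries.X := by
                rw [comp_X_right]
            _ = comp (comp F (comp B' L)) (comp B B') := by rw [hBB']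
            _ = comp (comp (comp F (comp B' L)) B) B' := (comp_assoc hB0 hB'0 _).symm
            _ = comp F B' := by rw [e2]
        rw [hGdef, comp_assoc hB'0 hL0 F, e3]
      calc coeff j G * ζ ^ j = coeff j (comp G L) := by
            rw [hLdef, coeff_comp_linear]
        _ = coeff j G := by rw [hGL]
    -- coefficients of G vanish off multiples of n
    haveI : NeZero ((n : k)) := ⟨Nat.cast_ne_zero.mpr (by omega)⟩
    obtain ⟨ζ₀, hζ₀⟩ := HasEnoughRootsOfUnity.exists_primitiveRoot k n
    have hGoff : ∀ j : ℕ, ¬ (n ∣ j) → coeff j G = 0 := by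
      intro j hj
      by_contra hne
      have := hGinv ζ₀ (hζ₀.pow_eq_one) j
      have hζj : ζ₀ ^ j = 1 := by
        have h2 : coeff j G * ζ₀ ^ j = coeff j G * 1 := by rw [mul_one]; exact this
        exact mul_left_cancel₀ hne h2
      exact hj ((hζ₀.pow_eq_one_iff_dvd j).mp hζj)
    have hGor : G.order = ((n * m : ℕ) : ℕ∞) := by
      have := order_comp (a := n * m) (b := 1) le_rfl hF hB'or
      rw [mul_one] at this
      exact this
    rw [PowerSeries.order_eq_nat] at hGor
    obtain ⟨hG2, hG1⟩ := hGor
    -- Y with G = comp Y (X ^ n)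
    set Y : PowerSeries k := PowerSeries.mk fun i => coeff (n * i) G with hYdef
    have hYG : comp Y (PowerSeries.X ^ n) = G := by
      ext j
      rw [coeff_comp]
      by_cases hdvd : n ∣ j
      · obtain ⟨i₀, rfl⟩ := hdvd
        rw [Finset.sum_eq_single i₀]
        · rw [← pow_mul, PowerSeries.coeff_X_pow, if_pos rfl, mul_one, PowerSeries.coeff_mk]
        · intro i _ hne
          rw [← pow_mul, PowerSeries.coeff_X_pow,
            if_neg (by
              intro hh
              exact hne (Nat.eq_of_mul_eq_mul_left (by omega) hh).symm), mul_zero]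
        · intro hh
          have h6 := Nat.le_mul_of_pos_left i₀ (show 0 < n by omega)
          exact absurd (Finset.mem_range.mpr (by omega)) hh
      · rw [hGoff j hdvd]
        apply Finset.sum_eq_zero
        intro i _
        rw [← pow_mul, PowerSeries.coeff_X_pow, if_neg (by
          intro hh
          exact hdvd ⟨i, hh⟩), mul_zero]
    refine ⟨Y, ?_, ?_⟩
    · rw [PowerSeries.order_eq_nat]
      constructor
      · rw [hYdef, PowerSeries.coeff_mk]
        exact hG2
      · intro i hi
        rw [hYdef, PowerSeries.coeff_mk]
        exact hG1 _ (by
          have h5 : n * (i + 1) ≤ n * m := Nat.mul_le_mul_left n (by omega)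
          rw [Nat.mul_add, Nat.mul_one] at h5
          omega)
    · have hXn0 : constantCoeff (PowerSeries.X ^ n : PowerSeries k) = 0 := by
        rw [map_pow, PowerSeries.constantCoeff_X, zero_pow (by omega)]
      calc F = comp F PowerSeries.X := (comp_X_right F).symm
        _ = comp F (comp B' B) := by rw [hB'B]
        _ = comp (comp F B') B := (comp_assoc hB'0 hB0 F).symm
        _ = comp G B := rfl
        _ = comp (comp Y (PowerSeries.X ^ n)) B := by rw [hYG]
        _ = comp Y (comp (PowerSeries.X ^ n) B) := comp_assoc hXn0 hB0 Y
        _ = comp Y A := by rw [hAcomp]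
end

section
/- Let k be an algebraically closed field of characteristic zero and A, B ∈ k[[z]] of orders n ≥ 2 and m ≥ 2 respectively, and let d ≥ 2 divide both n and m. Then there exist W of order d and Ã of order n/d, B̃ of order m/d with A = Ã ∘ W and B = B̃ ∘ W, if and only if the intersection G_A ∩ G_B of the transition groups contains a subgroup of order d. -/
open PowerSeries

section Aux

variable {k : Type*} [Field k]

lemma coeff_comp (A B : PowerSeries k) (n : ℕ) :
    coeff n (comp A B) =
      ∑ i ∈ Finset.range (n + 1), (coeff i A) * (coeff n (B ^ i)) := by
  simp [comp]

lemma coeff_pow_eq_zero {B : PowerSeries k} (hB : constantCoeff B = 0)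
    {n i : ℕ} (h : n < i) : coeff n (B ^ i) = 0 := by
  have hX : (X : PowerSeries k) ∣ B := X_dvd_iff.mpr hB
  have : (X : PowerSeries k) ^ i ∣ B ^ i := pow_dvd_pow_of_dvd hX i
  exact (X_pow_dvd_iff.mp this) n h

lemma comp_congr_left {A A' : PowerSeries k} (B : PowerSeries k) (n : ℕ)
    (h : ∀ i ≤ n, coeff i A = coeff i A') :
    coeff n (comp A B) = coeff n (comp A' B) := by
  rw [coeff_comp, coeff_comp]
  refine Finset.sum_congr rfl fun i hi => ?_
  rw [h i (Nat.lt_succ_iff.mp (Finset.mem_range.mp hi))]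

lemma constantCoeff_comp (A B : PowerSeries k) :
    constantCoeff (comp A B) = constantCoeff A := by
  rw [← coeff_zero_eq_constantCoeff_apply, coeff_comp]
  simp

lemma comp_add (A A' B : PowerSeries k) :
    comp (A + A') B = comp A B + comp A' B := by
  ext n
  simp only [coeff_comp, map_add, add_mul, Finset.sum_add_distrib]

lemma comp_C (c : k) (B : PowerSeries k) : comp (C c) B = C c := by
  ext n
  rw [coeff_comp]
  rcases Nat.eq_zero_or_pos n with rfl | hn
  · simp
  · rw [Finset.sum_eq_zero, coeff_C, if_neg hn.ne']
    intro i hi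
    rcases Nat.eq_zero_or_pos i with rfl | hi'
    · simp [coeff_zero_eq_constantCoeff, hn.ne']
    · rw [coeff_C, if_neg hi'.ne', zero_mul]

lemma comp_X_left {B : PowerSeries k} (hB : constantCoeff B = 0) :
    comp X B = B := by
  ext n
  rw [coeff_comp]
  rcases Nat.eq_zero_or_pos n with rfl | hn
  · simpa using hB.symm
  · rw [Finset.sum_eq_single 1]
    · simp
    · intro i hi hne
      rw [coeff_X, if_neg hne, zero_mul]
    · intro h
      exact absurd (Finset.mem_range.mpr (by omega)) h

/-- coefficient of aeval of a polynomial -/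
lemma coeff_aeval (p : Polynomial k) {B : PowerSeries k} (hB : constantCoeff B = 0) (n : ℕ) :
    coeff n (Polynomial.aeval B p) =
      ∑ i ∈ Finset.range (n + 1), p.coeff i * coeff n (B ^ i) := by
  conv_lhs => rw [p.as_sum_range' (max p.natDegree n + 1) (by omega)]
  rw [map_sum, map_sum]
  have key : ∀ i ∈ Finset.range (max p.natDegree n + 1),
      coeff n (Polynomial.aeval B (Polynomial.monomial i (p.coeff i)))
        = p.coeff i * coeff n (B ^ i) := by
    intro i _
    rw [Polynomial.aeval_monomial]
    rw [show (algebraMap k (PowerSeries k)) (p.coeff i) = C (p.coeff i) from rfl, coeff_C_mul]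
  rw [Finset.sum_congr rfl key]
  rcases le_total (max p.natDegree n + 1) (n + 1) with h | h
  · rw [Finset.sum_subset (Finset.range_subset_range.mpr h)]
    intro i _ hi
    rw [p.coeff_eq_zero_of_natDegree_lt (by simp at hi ⊢; omega), zero_mul]
  · rw [← Finset.sum_subset (Finset.range_subset_range.mpr h)]
    intro i hi hni
    simp only [Finset.mem_range] at hi hni
    rw [coeff_pow_eq_zero hB (by omega), mul_zero]

lemma coeff_comp_eq_aeval {A B : PowerSeries k} (hB : constantCoeff B = 0) {n N : ℕ}
    (hN : n < N) :
    coeff n (comp A B) = coeff n (Polynomial.aeval B (trunc N A)) := by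
  rw [coeff_comp, coeff_aeval _ hB]
  refine Finset.sum_congr rfl fun i hi => ?_
  rw [coeff_trunc, if_pos (by simp at hi; omega)]
-- chunk 2
lemma comp_X_right (A : PowerSeries k) : comp A X = A := by
  ext n
  rw [coeff_comp, Finset.sum_eq_single n]
  · rw [coeff_X_pow, if_pos rfl, mul_one]
  · intro i hi hne
    rw [coeff_X_pow, if_neg (Ne.symm hne), mul_zero]
  · intro h
    exact absurd (Finset.mem_range.mpr n.lt_succ_self) h

lemma comp_mul {B : PowerSeries k} (hB : constantCoeff B = 0) (A₁ A₂ : PowerSeries k) :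
    comp (A₁ * A₂) B = comp A₁ B * comp A₂ B := by
  ext n
  have h1 : coeff n (comp (A₁ * A₂) B)
      = coeff n (Polynomial.aeval B (trunc (n+1) A₁ * trunc (n+1) A₂)) := by
    rw [coeff_comp, coeff_aeval _ hB]
    refine Finset.sum_congr rfl fun i hi => ?_
    congr 1
    rw [← Polynomial.coeff_coe]
    rw [coeff_mul_eq_coeff_trunc_mul_trunc A₁ A₂ (show i < n+1 by simpa using hi),
      ← Polynomial.coe_mul, Polynomial.coeff_coe]
  rw [h1, map_mul, coeff_mul, coeff_mul]
  refine Finset.sum_congr rfl fun p hp => ?_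
  have hps := Finset.HasAntidiagonal.mem_antidiagonal.mp hp
  rw [← coeff_comp_eq_aeval hB (show p.1 < n+1 by omega),
      ← coeff_comp_eq_aeval hB (show p.2 < n+1 by omega)]

lemma comp_one {B : PowerSeries k} : comp 1 B = 1 := by
  have := comp_C (1:k) B
  rwa [map_one] at this

lemma comp_pow {B : PowerSeries k} (hB : constantCoeff B = 0) (A : PowerSeries k) (j : ℕ) :
    comp (A ^ j) B = (comp A B) ^ j := by
  induction j with
  | zero => simpa using comp_one
  | succ j ih => rw [pow_succ, pow_succ, comp_mul hB, ih]

lemma comp_smulX {B : PowerSeries k} (hB : constantCoeff B = 0) (c : k) :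
    comp (C c * X) B = C c * B := by
  rw [comp_mul hB, comp_C, comp_X_left hB]

lemma aeval_comp {B Cs : PowerSeries k} (hB : constantCoeff B = 0)
    (hC : constantCoeff Cs = 0) (p : Polynomial k) :
    comp (Polynomial.aeval B p) Cs = Polynomial.aeval (comp B Cs) p := by
  induction p using Polynomial.induction_on' with
  | add p q hp hq => rw [map_add, map_add, comp_add, hp, hq]
  | monomial i c =>
      rw [Polynomial.aeval_monomial, Polynomial.aeval_monomial]
      show comp (C c * B ^ i) Cs = C c * (comp B Cs) ^ i
      rw [comp_mul hC, comp_C, comp_pow hC]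

lemma constantCoeff_aeval {B : PowerSeries k} (hB : constantCoeff B = 0) (p : Polynomial k) :
    True := trivial

lemma comp_assoc {A B Cs : PowerSeries k} (hB : constantCoeff B = 0)
    (hC : constantCoeff Cs = 0) :
    comp (comp A B) Cs = comp A (comp B Cs) := by
  have hBC : constantCoeff (comp B Cs) = 0 := by rw [constantCoeff_comp]; exact hB
  ext n
  rw [coeff_comp_eq_aeval hBC n.lt_succ_self (A := A) (N := n+1)]
  rw [← aeval_comp hB hC]
  -- now: coeff n (comp (comp A B) Cs) = coeff n (comp (aeval B (trunc (n+1) A)) Cs)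
  apply comp_congr_left
  intro i hi
  exact coeff_comp_eq_aeval hB (by omega)

-- chunk 3 : order lemmas
lemma coeff_pow_eq_zero_of_order {B : PowerSeries k} {b : ℕ} (hb : B.order = (b : ℕ∞))
    {m i : ℕ} (h : m < i * b) : coeff m (B ^ i) = 0 := by
  have hX : (X : PowerSeries k) ^ b ∣ B := by
    rw [X_pow_dvd_iff]
    intro j hj
    exact coeff_of_lt_order j (by rw [hb]; exact_mod_cast hj)
  have h2 : (X : PowerSeries k) ^ (i * b) ∣ B ^ i := by
    rw [mul_comm, pow_mul]
    exact pow_dvd_pow_of_dvd hX i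
  exact X_pow_dvd_iff.mp h2 m h

lemma coeff_pow_order {B : PowerSeries k} {b : ℕ} (hb : B.order = (b : ℕ∞)) (i : ℕ) :
    coeff (i * b) (B ^ i) = (coeff b B) ^ i := by
  induction i with
  | zero => simp
  | succ i ih =>
      rw [pow_succ, pow_succ, coeff_mul, Finset.sum_eq_single (i * b, b)]
      · rw [ih]
      · rintro ⟨p, q⟩ hpq hne
        have hs := Finset.HasAntidiagonal.mem_antidiagonal.mp hpq
        simp only at hs
        have hsb : p + q = i * b + b := by rw [hs]; ring
        rcases lt_or_ge p (i * b) with h | h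
        · rw [coeff_pow_eq_zero_of_order hb h, zero_mul]
        · have hq : q < b := by
            rcases h.lt_or_eq with h' | h'
            · omega
            · exact absurd (by rw [Prod.ext_iff]; constructor <;> simp <;> omega : (p, q) = (i * b, b)) hne
          rw [coeff_of_lt_order q (by rw [hb]; exact_mod_cast hq), mul_zero]
      · intro h
        exact absurd (Finset.HasAntidiagonal.mem_antidiagonal.mpr (by simp; ring)) h

lemma order_pos_of_constantCoeff {B : PowerSeries k} {b : ℕ} (hB : constantCoeff B = 0)
    (hb : B.order = (b : ℕ∞)) : 1 ≤ b := by
  by_contra h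
  have hb0 : b = 0 := by omega
  subst hb0
  have := (order_eq_nat.mp hb).1
  simpa [hB] using this

lemma order_comp {A B : PowerSeries k} {a b : ℕ} (hB : constantCoeff B = 0)
    (ha : A.order = (a : ℕ∞)) (hb : B.order = (b : ℕ∞)) :
    (comp A B).order = ((a * b : ℕ) : ℕ∞) := by
  have hb1 : 1 ≤ b := order_pos_of_constantCoeff hB hb
  rw [order_eq_nat]
  constructor
  · rw [coeff_comp, Finset.sum_eq_single a]
    · rw [coeff_pow_order hb]
      exact mul_ne_zero (order_eq_nat.mp ha).1
        (pow_ne_zero _ (order_eq_nat.mp hb).1)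
    · intro i hi hne
      rcases lt_or_ge i a with h | h
      · rw [coeff_of_lt_order i (by rw [ha]; exact_mod_cast h), zero_mul]
      · have : a * b < i * b := by
          rcases h.lt_or_eq with h' | h'
          · exact (Nat.mul_lt_mul_right (by omega : 0 < b)).mpr h'
          · exact absurd h'.symm hne
        rw [coeff_pow_eq_zero_of_order hb this, mul_zero]
    · intro h
      exact absurd (Finset.mem_range.mpr (by nlinarith)) h
  · intro m hm
    have hm' : m < a * b := by exact_mod_cast hm
    rw [coeff_comp, Finset.sum_eq_zero]
    intro i hi
    rcases lt_or_ge i a with h | h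
    · rw [coeff_of_lt_order i (by rw [ha]; exact_mod_cast h), zero_mul]
    · have : m < i * b := lt_of_lt_of_le hm' (Nat.mul_le_mul_right b h)
      rw [coeff_pow_eq_zero_of_order hb this, mul_zero]

lemma order_eq_one_iff {φ : PowerSeries k} :
    φ.order = (1 : ℕ∞) ↔ constantCoeff φ = 0 ∧ coeff 1 φ ≠ 0 := by
  rw [show ((1:ℕ∞)) = ((1:ℕ) : ℕ∞) from rfl, order_eq_nat]
  constructor
  · rintro ⟨h1, h2⟩
    exact ⟨by simpa using h2 0 one_pos, h1⟩
  · rintro ⟨h1, h2⟩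
    refine ⟨h2, fun i hi => ?_⟩
    have : i = 0 := by omega
    subst this; simpa using h1

lemma comp_zero_left (B : PowerSeries k) : comp 0 B = 0 := by
  ext n; rw [coeff_comp]; simp

lemma coeff_one_comp {A B : PowerSeries k} (hB : constantCoeff B = 0) :
    coeff 1 (comp A B) = coeff 1 A * coeff 1 B := by
  rw [coeff_comp]
  rw [show (1:ℕ)+1 = 2 from rfl, Finset.sum_range_succ, Finset.sum_range_one]
  simp [pow_one]

-- chunk 4 : successive approximation machinery
noncomputable def approx (init : PowerSeries k) (corr : ℕ → PowerSeries k → k) :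
    ℕ → PowerSeries k
  | 0 => init
  | n+1 => approx init corr n + C (corr n (approx init corr n)) * X ^ (n+1)

lemma approx_stable (init : PowerSeries k) (corr : ℕ → PowerSeries k → k)
    {i n m : ℕ} (hnm : n ≤ m) (hi : i ≤ n) :
    coeff i (approx init corr m) = coeff i (approx init corr n) := by
  induction m with
  | zero => have : n = 0 := by omega
            subst this; rfl
  | succ m ih =>
      rcases Nat.lt_or_ge n (m+1) with h | h
      · have hnm' : n ≤ m := by omega
        rw [show approx init corr (m+1)
            = approx init corr m + C (corr m (approx init corr m)) * X ^ (m+1) from rfl]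
        rw [map_add, coeff_C_mul, coeff_X_pow, if_neg (by omega), mul_zero, add_zero]
        exact ih hnm'
      · have : n = m + 1 := by omega
        subst this; rfl

noncomputable def alimit (init : PowerSeries k) (corr : ℕ → PowerSeries k → k) :
    PowerSeries k :=
  mk fun i => coeff i (approx init corr i)

lemma coeff_alimit (init : PowerSeries k) (corr : ℕ → PowerSeries k → k)
    {i n : ℕ} (hi : i ≤ n) :
    coeff i (alimit init corr) = coeff i (approx init corr n) := by
  rw [alimit, coeff_mk, approx_stable init corr hi le_rfl]

-- compositional inverse
lemma exists_right_inverse {S : PowerSeries k} (hS0 : constantCoeff S = 0)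
    (ha : coeff 1 S ≠ 0) :
    ∃ S' : PowerSeries k, constantCoeff S' = 0 ∧ coeff 1 S' ≠ 0 ∧ comp S' S = X := by
  set a := coeff 1 S with ha_def
  have hordS : S.order = ((1:ℕ) : ℕ∞) := order_eq_one_iff.mpr ⟨hS0, ha⟩
  set corr : ℕ → PowerSeries k → k :=
    fun n P => (a ^ (n+1))⁻¹ * (coeff (n+1) X - coeff (n+1) (comp P S)) with hcorr
  set g : ℕ → PowerSeries k := approx 0 corr with hg
  have hpow : ∀ n : ℕ, coeff n (S ^ n) = a ^ n := by
    intro n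
    have := coeff_pow_order hordS n
    rwa [mul_one] at this
  have hgconst : ∀ n, constantCoeff (g n) = 0 := by
    intro n
    induction n with
    | zero => simp [hg, approx]
    | succ n ih =>
        show constantCoeff (g n + C (corr n (g n)) * X ^ (n+1)) = 0
        rw [map_add, ih, map_mul, map_pow, constantCoeff_X, zero_pow (by omega), mul_zero,
          add_zero]
  have hinv : ∀ n, ∀ i ≤ n, coeff i (comp (g n) S) = coeff i X := by
    intro n
    induction n with
    | zero =>
        intro i hi
        have : i = 0 := by omega
        subst this
        rw [coeff_zero_eq_constantCoeff_apply, coeff_zero_eq_constantCoeff_apply,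
          constantCoeff_comp, hgconst 0, constantCoeff_X]
    | succ n ih =>
        intro i hi
        have hstep : comp (g (n+1)) S = comp (g n) S + C (corr n (g n)) * S ^ (n+1) := by
          show comp (g n + C (corr n (g n)) * X ^ (n+1)) S = _
          rw [comp_add, comp_mul hS0, comp_C, comp_pow hS0, comp_X_left hS0]
        rcases Nat.lt_or_ge i (n+1) with h | h
        · rw [hstep, map_add, coeff_C_mul, coeff_pow_eq_zero hS0 h, mul_zero, add_zero]
          exact ih i (by omega)
        · have : i = n + 1 := by omega
          subst this
          rw [hstep, map_add, coeff_C_mul, hpow (n+1), hcorr]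
          field_simp
          ring
  refine ⟨alimit 0 corr, ?_, ?_, ?_⟩
  · rw [← coeff_zero_eq_constantCoeff_apply, coeff_alimit 0 corr le_rfl]
    show coeff 0 (g 0) = 0
    rw [coeff_zero_eq_constantCoeff_apply, hgconst 0]
  · intro hzero
    have h1 : coeff 1 (comp (g 1) S) = coeff 1 X := hinv 1 1 le_rfl
    rw [coeff_one_comp hS0, coeff_X, if_pos rfl] at h1
    rw [coeff_alimit 0 corr le_rfl] at hzero
    rw [show coeff 1 (g 1) = 0 from hzero, zero_mul] at h1
    exact zero_ne_one h1
  · ext N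
    have : coeff N (comp (alimit 0 corr) S) = coeff N (comp (g N) S) := by
      apply comp_congr_left
      intro i hi
      exact coeff_alimit 0 corr hi
    rw [this, hinv N N le_rfl]

lemma exists_comp_inverse {S : PowerSeries k} (hS0 : constantCoeff S = 0)
    (ha : coeff 1 S ≠ 0) :
    ∃ S' : PowerSeries k, constantCoeff S' = 0 ∧ coeff 1 S' ≠ 0 ∧
      comp S S' = X ∧ comp S' S = X := by
  obtain ⟨S', h0, h1, hleft⟩ := exists_right_inverse hS0 ha
  obtain ⟨S'', h0', h1', hleft'⟩ := exists_right_inverse h0 h1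
  have hSS : S'' = S := by
    calc S'' = comp S'' X := (comp_X_right S'').symm
    _ = comp S'' (comp S' S) := by rw [hleft]
    _ = comp (comp S'' S') S := (comp_assoc h0 hS0).symm
    _ = comp X S := by rw [hleft']
    _ = S := comp_X_left hS0
  exact ⟨S', h0, h1, by rw [← hSS]; exact hleft', hleft⟩

-- chunk 5 : d-th roots
lemma pow_coeff_sub {y y' : PowerSeries k} {d : ℕ} {N : ℕ}
    (hlow : ∀ i < N, coeff i y = coeff i y') :
    coeff N (y ^ d) - coeff N (y' ^ d)
      = (constantCoeff (∑ j ∈ Finset.range d, y ^ j * y' ^ (d - 1 - j)))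
          * (coeff N y - coeff N y') := by
  have key := geom_sum₂_mul y y' d
  have : coeff N (y ^ d) - coeff N (y' ^ d)
      = coeff N ((∑ j ∈ Finset.range d, y ^ j * y' ^ (d - 1 - j)) * (y - y')) := by
    rw [key, map_sub]
  rw [this, coeff_mul, Finset.sum_eq_single (0, N)]
  · rw [coeff_zero_eq_constantCoeff_apply, map_sub]
  · rintro ⟨p, q⟩ hpq hne
    have hs := Finset.HasAntidiagonal.mem_antidiagonal.mp hpq
    simp only at hs
    rcases Nat.lt_or_ge q N with h | h
    · rw [map_sub, hlow q h, sub_self, mul_zero]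
    · have : p = 0 ∧ q = N := by omega
      exact absurd (by rw [this.1, this.2]) hne
  · intro h
    exact absurd (Finset.HasAntidiagonal.mem_antidiagonal.mpr (by simp)) h

lemma constantCoeff_geom_sum {y y' : PowerSeries k} (hy : constantCoeff y = 1)
    (hy' : constantCoeff y' = 1) (d : ℕ) :
    constantCoeff (∑ j ∈ Finset.range d, y ^ j * y' ^ (d - 1 - j)) = (d : k) := by
  rw [map_sum]
  rw [Finset.sum_congr rfl (fun j _ => by rw [map_mul, map_pow, map_pow, hy, hy', one_pow,
    one_pow, one_mul])]
  simp

lemma pow_coeff_sub' {y y' : PowerSeries k} {d : ℕ} (hy : constantCoeff y = 1)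
    (hy' : constantCoeff y' = 1) {N : ℕ}
    (hlow : ∀ i < N, coeff i y = coeff i y') :
    coeff N (y ^ d) - coeff N (y' ^ d) = (d : k) * (coeff N y - coeff N y') := by
  rw [pow_coeff_sub hlow, constantCoeff_geom_sum hy hy']

lemma exists_pow_root {u : PowerSeries k} (hu : constantCoeff u = 1) {d : ℕ}
    (hdk : (d : k) ≠ 0) :
    ∃ v : PowerSeries k, constantCoeff v = 1 ∧ v ^ d = u := by
  set corr : ℕ → PowerSeries k → k :=
    fun n P => (d : k)⁻¹ * (coeff (n+1) u - coeff (n+1) (P ^ d)) with hcorr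
  set f : ℕ → PowerSeries k := approx 1 corr with hf
  have hfconst : ∀ n, constantCoeff (f n) = 1 := by
    intro n
    induction n with
    | zero => simp [hf, approx]
    | succ n ih =>
        show constantCoeff (f n + C (corr n (f n)) * X ^ (n+1)) = 1
        rw [map_add, ih, map_mul, map_pow, constantCoeff_X, zero_pow (by omega), mul_zero,
          add_zero]
  have hflow : ∀ n, ∀ i ≤ n, coeff i (f (n+1)) = coeff i (f n) := by
    intro n i hi
    show coeff i (f n + C (corr n (f n)) * X ^ (n+1)) = coeff i (f n)
    rw [map_add, coeff_C_mul, coeff_X_pow, if_neg (by omega), mul_zero, add_zero]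
  have hinv : ∀ n, ∀ i ≤ n, coeff i ((f n) ^ d) = coeff i u := by
    intro n
    induction n with
    | zero =>
        intro i hi
        have : i = 0 := by omega
        subst this
        rw [coeff_zero_eq_constantCoeff_apply, coeff_zero_eq_constantCoeff_apply, map_pow,
          hfconst 0, one_pow, hu]
    | succ n ih =>
        intro i hi
        have hsub := pow_coeff_sub' (d := d) (hfconst (n+1)) (hfconst n)
          (N := i) (fun i' hi' => hflow n i' (by omega))
        rcases Nat.lt_or_ge i (n+1) with h | h
        · rw [hflow n i (by omega), sub_self, mul_zero, sub_eq_zero] at hsub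
          rw [hsub]
          exact ih i (by omega)
        · have hieq : i = n + 1 := by omega
          subst hieq
          have hco : coeff (n+1) (f (n+1)) - coeff (n+1) (f n) = corr n (f n) := by
            show coeff (n+1) (f n + C (corr n (f n)) * X ^ (n+1)) - _ = _
            rw [map_add, coeff_C_mul, coeff_X_pow, if_pos rfl, mul_one, add_sub_cancel_left]
          rw [hco, hcorr] at hsub
          have : (d:k) * ((d:k)⁻¹ * (coeff (n+1) u - coeff (n+1) (f n ^ d)))
              = coeff (n+1) u - coeff (n+1) (f n ^ d) := by
            field_simp
          rw [this] at hsub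
          exact sub_left_inj.mp hsub
  refine ⟨alimit 1 corr, ?_, ?_⟩
  · rw [← coeff_zero_eq_constantCoeff_apply, coeff_alimit 1 corr le_rfl]
    show coeff 0 (f 0) = 1
    rw [coeff_zero_eq_constantCoeff_apply, hfconst 0]
  · ext N
    have hvc : constantCoeff (alimit 1 corr) = 1 := by
      rw [← coeff_zero_eq_constantCoeff_apply, coeff_alimit 1 corr le_rfl]
      show coeff 0 (f 0) = 1
      rw [coeff_zero_eq_constantCoeff_apply, hfconst 0]
    have hsub := pow_coeff_sub' (d := d) hvc (hfconst N)
      (N := N) (fun i hi => coeff_alimit 1 corr (le_of_lt hi))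
    rw [coeff_alimit 1 corr le_rfl, sub_self, mul_zero, sub_eq_zero] at hsub
    rw [hsub, hinv N N le_rfl]

-- chunk 6 : normal form of an order-d series
lemma constantCoeff_eq_zero_of_order {W : PowerSeries k} {d : ℕ} (hd : 1 ≤ d)
    (hW : W.order = (d : ℕ∞)) : constantCoeff W = 0 := by
  rw [← coeff_zero_eq_constantCoeff_apply]
  exact coeff_of_lt_order 0 (by rw [hW]; exact_mod_cast (by omega : (0:ℕ) < d))

lemma exists_normal_form {W : PowerSeries k} {d : ℕ} (hd : 1 ≤ d) (hdk : (d : k) ≠ 0)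
    (hW : W.order = (d : ℕ∞)) :
    ∃ c : k, ∃ S : PowerSeries k, c ≠ 0 ∧ constantCoeff S = 0 ∧ coeff 1 S ≠ 0 ∧
      W = comp (C c * X ^ d) S := by
  set c := coeff d W with hc_def
  have hc : c ≠ 0 := (order_eq_nat.mp hW).1
  set u : PowerSeries k := mk fun i => c⁻¹ * coeff (d + i) W with hu_def
  have hu : constantCoeff u = 1 := by
    rw [← coeff_zero_eq_constantCoeff_apply, hu_def, coeff_mk]
    simp [← hc_def, inv_mul_cancel₀ hc]
  obtain ⟨v, hv1, hvd⟩ := exists_pow_root hu hdk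
  set S : PowerSeries k := X * v with hS_def
  have hS0 : constantCoeff S = 0 := by
    rw [hS_def, map_mul, constantCoeff_X, zero_mul]
  have hS1 : coeff 1 S ≠ 0 := by
    rw [hS_def, show (1:ℕ) = 0 + 1 from rfl, coeff_succ_X_mul, coeff_zero_eq_constantCoeff_apply,
      hv1]
    exact one_ne_zero
  refine ⟨c, S, hc, hS0, hS1, ?_⟩
  have h1 : comp (C c * X ^ d) S = C c * X ^ d * u := by
    rw [comp_mul hS0, comp_C, comp_pow hS0, comp_X_left hS0, hS_def, mul_pow, hvd, mul_assoc]
  rw [h1]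
  ext j
  rw [show C c * X ^ d * u = C c * (X ^ d * u) from mul_assoc _ _ _, coeff_C_mul]
  rcases Nat.lt_or_ge j d with h | h
  · rw [coeff_of_lt_order j (by rw [hW]; exact_mod_cast h)]
    have : coeff j (X ^ d * u) = 0 := coeff_of_lt_order j (by
      rw [order_mul, order_X_pow]
      refine lt_of_lt_of_le (show (j:ℕ∞) < (d:ℕ∞) by exact_mod_cast h) le_self_add)
    rw [this, mul_zero]
  · obtain ⟨i, rfl⟩ := Nat.exists_eq_add_of_le h
    have hx : coeff (d+i) (X ^ d * u) = coeff i u := by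
      rw [add_comm d i]; exact coeff_X_pow_mul u d i
    rw [hx, hu_def, coeff_mk, ← mul_assoc, mul_inv_cancel₀ hc, one_mul]

-- chunk 7 : iterComp algebra and forward direction
lemma comp_sub (A A' B : PowerSeries k) :
    comp (A - A') B = comp A B - comp A' B := by
  have := comp_add (A - A') A' B
  rw [sub_add_cancel] at this
  rw [this]; ring

lemma comp_sum {α : Type*} [DecidableEq α] (s : Finset α) (F : α → PowerSeries k) (B : PowerSeries k) :
    comp (∑ a ∈ s, F a) B = ∑ a ∈ s, comp (F a) B := by
  induction s using Finset.induction_on with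
  | empty => simp [comp_zero_left]
  | insert _ _ h ih => rw [Finset.sum_insert h, Finset.sum_insert h, comp_add, ih]

lemma constantCoeff_iterComp (ψ : PowerSeries k) (j : ℕ) :
    constantCoeff (iterComp ψ j) = if j = 0 then 0 else constantCoeff ψ := by
  cases j with
  | zero => simp [iterComp, constantCoeff_X]
  | succ j => rw [show iterComp ψ (j+1) = comp ψ (iterComp ψ j) from rfl, constantCoeff_comp,
      if_neg (by omega)]

lemma constantCoeff_iterComp' {ψ : PowerSeries k} (hψ : constantCoeff ψ = 0) (j : ℕ) :
    constantCoeff (iterComp ψ j) = 0 := by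
  rw [constantCoeff_iterComp]
  split <;> simp [hψ]

lemma coeff_one_iterComp {ψ : PowerSeries k} (hψ : constantCoeff ψ = 0) (j : ℕ) :
    coeff 1 (iterComp ψ j) = (coeff 1 ψ) ^ j := by
  induction j with
  | zero => simp [iterComp, coeff_X]
  | succ j ih =>
      rw [show iterComp ψ (j+1) = comp ψ (iterComp ψ j) from rfl,
        coeff_one_comp (constantCoeff_iterComp' hψ j), ih, pow_succ]
      ring

lemma iterComp_one (ψ : PowerSeries k) : iterComp ψ 1 = ψ := by
  show comp ψ X = ψ
  exact comp_X_right ψ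

lemma iterComp_add {ψ : PowerSeries k} (hψ : constantCoeff ψ = 0) (a b : ℕ) :
    iterComp ψ (a + b) = comp (iterComp ψ a) (iterComp ψ b) := by
  induction a with
  | zero => rw [zero_add, show iterComp ψ 0 = X from rfl,
      comp_X_left (constantCoeff_iterComp' hψ b)]
  | succ a ih =>
      rw [show a + 1 + b = (a + b) + 1 by omega,
        show iterComp ψ ((a+b)+1) = comp ψ (iterComp ψ (a+b)) from rfl, ih,
        show iterComp ψ (a+1) = comp ψ (iterComp ψ a) from rfl,
        comp_assoc (constantCoeff_iterComp' hψ a) (constantCoeff_iterComp' hψ b)]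

lemma iterComp_X : ∀ j : ℕ, iterComp (X : PowerSeries k) j = X
  | 0 => rfl
  | j+1 => by
      rw [show iterComp (X : PowerSeries k) (j+1) = comp X (iterComp X j) from rfl,
        iterComp_X j, comp_X_right]

lemma iterComp_mul {ψ : PowerSeries k} (hψ : constantCoeff ψ = 0) (a b : ℕ) :
    iterComp ψ (a * b) = iterComp (iterComp ψ a) b := by
  induction b with
  | zero => rw [mul_zero]; rfl
  | succ b ih =>
      rw [show iterComp (iterComp ψ a) (b+1) = comp (iterComp ψ a) (iterComp (iterComp ψ a) b)
          from rfl, ← ih, ← iterComp_add hψ, Nat.mul_succ]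
      ring_nf

lemma conj_iter {S S' : PowerSeries k} (hS0 : constantCoeff S = 0)
    (hS'0 : constantCoeff S' = 0) (hSS' : comp S S' = X) (hS'S : comp S' S = X)
    (ζ : k) (j : ℕ) :
    iterComp (comp S' (C ζ * S)) j = comp S' (C (ζ ^ j) * S) := by
  have hCS : ∀ a : k, constantCoeff (C a * S) = 0 := fun a => by
    rw [map_mul, hS0, mul_zero]
  induction j with
  | zero =>
      show X = comp S' (C (ζ ^ 0) * S)
      rw [pow_zero, map_one, one_mul]
      exact hS'S.symm
  | succ j ih =>
      rw [show iterComp (comp S' (C ζ * S)) (j+1)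
          = comp (comp S' (C ζ * S)) (iterComp (comp S' (C ζ * S)) j) from rfl, ih]
      have h1 : constantCoeff (comp S' (C (ζ^j) * S)) = 0 := by
        rw [constantCoeff_comp, hS'0]
      rw [comp_assoc (hCS ζ) h1]
      congr 1
      rw [comp_mul h1, comp_C]
      rw [← comp_assoc hS'0 (hCS (ζ^j)), hSS', comp_X_left (hCS (ζ^j))]
      rw [← mul_assoc, ← map_mul, ← pow_succ']

-- chunk 8 : forward direction
lemma exists_primRoot [IsAlgClosed k] [CharZero k] {d : ℕ} (hd : 1 ≤ d) :
    ∃ ζ : k, IsPrimitiveRoot ζ d := by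
  have hne : NeZero ((d : k)) := ⟨Nat.cast_ne_zero.mpr (by omega)⟩
  have hdeg : (Polynomial.cyclotomic d k).degree ≠ 0 := by
    rw [Polynomial.degree_cyclotomic]
    exact_mod_cast (Nat.cast_ne_zero (R := WithBot ℕ)).mpr (Nat.totient_pos.mpr (by omega)).ne'
  obtain ⟨ζ, hζ⟩ := IsAlgClosed.exists_root _ hdeg
  exact ⟨ζ, (Polynomial.isRoot_cyclotomic_iff).mp hζ⟩

lemma forward_dir [IsAlgClosed k] [CharZero k] {d : ℕ} (hd : 2 ≤ d) {W : PowerSeries k}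
    (hW : W.order = (d : ℕ∞)) :
    ∃ ψ : PowerSeries k, ψ.order = (1 : ℕ∞) ∧ comp W ψ = W ∧ iterComp ψ d = X ∧
      ∀ j : ℕ, 0 < j → j < d → iterComp ψ j ≠ X := by
  obtain ⟨ζ, hζ⟩ := exists_primRoot (k := k) (by omega : 1 ≤ d)
  have hζd : ζ ^ d = 1 := hζ.pow_eq_one
  have hζ0 : ζ ≠ 0 := fun h => by simp [h, zero_pow (by omega : d ≠ 0)] at hζd
  obtain ⟨c, S, hc, hS0, hS1, hWf⟩ := exists_normal_form (by omega) (Nat.cast_ne_zero.mpr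
    (by omega)) hW
  obtain ⟨S', hS'0, hS'1, hSS', hS'S⟩ := exists_comp_inverse hS0 hS1
  have hCS : ∀ a : k, constantCoeff (C a * S) = 0 := fun a => by
    rw [map_mul, hS0, mul_zero]
  set ψ := comp S' (C ζ * S) with hψ_def
  have hψ0 : constantCoeff ψ = 0 := by rw [hψ_def, constantCoeff_comp, hS'0]
  have hprod : coeff 1 S' * coeff 1 S = 1 := by
    have := coeff_one_comp (A := S') hS0
    rw [hS'S, coeff_X, if_pos rfl] at this
    exact this.symm
  have hψ1 : coeff 1 ψ = ζ := by
    rw [hψ_def, coeff_one_comp (hCS ζ), coeff_C_mul]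
    calc coeff 1 S' * (ζ * coeff 1 S) = ζ * (coeff 1 S' * coeff 1 S) := by ring
    _ = ζ := by rw [hprod, mul_one]
  have hit : ∀ j, iterComp ψ j = comp S' (C (ζ ^ j) * S) :=
    fun j => conj_iter hS0 hS'0 hSS' hS'S ζ j
  refine ⟨ψ, ?_, ?_, ?_, ?_⟩
  · exact order_eq_one_iff.mpr ⟨hψ0, by rw [hψ1]; exact hζ0⟩
  · -- comp W ψ = W
    have hSψ : comp S ψ = C ζ * S := by
      rw [hψ_def, ← comp_assoc hS'0 (hCS ζ), hSS', comp_X_left (hCS ζ)]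
    rw [hWf, comp_assoc hS0 hψ0, hSψ, comp_mul (hCS ζ), comp_C, comp_pow (hCS ζ),
      comp_X_left (hCS ζ), mul_pow, ← map_pow, hζd, map_one, one_mul,
      comp_mul hS0, comp_C, comp_pow hS0, comp_X_left hS0]
  · rw [hit d, hζd, map_one, one_mul, hS'S]
  · intro j hj1 hj2 hX
    rw [hit j] at hX
    have h1 : coeff 1 (comp S' (C (ζ ^ j) * S)) = 1 := by
      rw [hX, coeff_X, if_pos rfl]
    rw [coeff_one_comp (hCS (ζ^j)), coeff_C_mul] at h1
    have : ζ ^ j = 1 := by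
      calc ζ ^ j = ζ ^ j * (coeff 1 S' * coeff 1 S) := by rw [hprod, mul_one]
      _ = coeff 1 S' * (ζ ^ j * coeff 1 S) := by ring
      _ = 1 := h1
    exact hζ.pow_ne_one_of_pos_of_lt hj1.ne' hj2 this

-- chunk 9 : rigidity
lemma pow_congr_low {Q : PowerSeries k} (hQ0 : constantCoeff Q = 0) {r : ℕ} (hr : 2 ≤ r)
    (hQ : ∀ i < r, coeff i Q = coeff i X) {l : ℕ} (hl : 2 ≤ l) {i : ℕ} (hi : i ≤ r) :
    coeff i (Q ^ l) = coeff i ((X : PowerSeries k) ^ l) := by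
  have key := geom_sum₂_mul Q (X : PowerSeries k) l
  have hE : constantCoeff (∑ j ∈ Finset.range l, Q ^ j * (X : PowerSeries k) ^ (l - 1 - j))
      = 0 := by
    rw [map_sum, Finset.sum_eq_zero]
    intro j hj
    rw [map_mul, map_pow, map_pow, hQ0, constantCoeff_X]
    rcases Nat.lt_or_ge j (l-1) with h | h
    · rw [zero_pow (show l - 1 - j ≠ 0 by omega), mul_zero]
    · rw [zero_pow (show j ≠ 0 by simp at hj; omega), zero_mul]
  have hsub : coeff i (Q ^ l) - coeff i ((X : PowerSeries k) ^ l) = 0 := by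
    rw [show coeff i (Q ^ l) - coeff i ((X : PowerSeries k) ^ l)
        = coeff i (Q ^ l - (X : PowerSeries k) ^ l) from (map_sub _ _ _).symm, ← key,
      coeff_mul, Finset.sum_eq_zero]
    rintro ⟨p, q⟩ hpq
    have hs := Finset.HasAntidiagonal.mem_antidiagonal.mp hpq
    simp only at hs
    rcases Nat.lt_or_ge q r with h | h
    · rw [map_sub, hQ q h, sub_self, mul_zero]
    · have hp : p = 0 := by omega
      subst hp
      rw [coeff_zero_eq_constantCoeff_apply, hE, zero_mul]
  exact sub_eq_zero.mp hsub

lemma rigidity [CharZero k] {φ : PowerSeries k} (h0 : constantCoeff φ = 0)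
    (h1 : coeff 1 φ = 1) {N : ℕ} (hN : 1 ≤ N) (hit : iterComp φ N = X) : φ = X := by
  classical
  by_contra hne
  have hex : ∃ i, coeff i φ ≠ coeff i (X : PowerSeries k) := by
    by_contra h
    push_neg at h
    exact hne (PowerSeries.ext h)
  set r := Nat.find hex with hr_def
  have hrne : coeff r φ ≠ coeff r (X : PowerSeries k) := Nat.find_spec hex
  have hmin : ∀ i < r, coeff i φ = coeff i (X : PowerSeries k) :=
    fun i hi => not_not.mp (Nat.find_min hex hi)
  have hr2 : 2 ≤ r := by
    rcases Nat.lt_or_ge r 2 with h | h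
    · exfalso
      interval_cases r
      · exact hrne (by rw [coeff_zero_eq_constantCoeff_apply, coeff_zero_eq_constantCoeff_apply,
          h0, constantCoeff_X])
      · exact hrne (by rw [h1, coeff_X, if_pos rfl])
    · exact h
  set c := coeff r φ - coeff r (X : PowerSeries k) with hc_def
  have hc : c ≠ 0 := sub_ne_zero.mpr hrne
  have claim : ∀ j : ℕ, (∀ i < r, coeff i (iterComp φ j) = coeff i (X : PowerSeries k)) ∧
      coeff r (iterComp φ j) = coeff r (X : PowerSeries k) + (j : k) * c := by
    intro j
    induction j with
    | zero => exact ⟨fun i _ => rfl, by simp [show iterComp φ 0 = X from rfl]⟩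
    | succ j ih =>
        obtain ⟨IH1, IH2⟩ := ih
        set Q := iterComp φ j with hQ_def
        have hQ0 : constantCoeff Q = 0 := constantCoeff_iterComp' h0 j
        have hsplit : iterComp φ (j+1) = comp (φ - X) Q + Q := by
          rw [comp_sub, comp_X_left hQ0, sub_add_cancel]
          rfl
        have hkey : ∀ i ≤ r, coeff i (comp (φ - X) Q)
            = if i = r then c * coeff r (Q ^ r) else 0 := by
          intro i hi
          rw [coeff_comp]
          rcases Nat.lt_or_ge i r with h | h
          · rw [if_neg (by omega), Finset.sum_eq_zero]
            intro l hl
            rw [map_sub, hmin l (by simp at hl; omega), sub_self, zero_mul]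
          · have : i = r := by omega
            subst this
            rw [if_pos rfl, Finset.sum_eq_single r]
            · rw [map_sub]
            · intro l hl hlr
              rw [map_sub, hmin l (by simp at hl; omega), sub_self, zero_mul]
            · intro habs
              exact absurd (Finset.mem_range.mpr (by omega)) habs
        constructor
        · intro i hi
          rw [hsplit, map_add, hkey i (by omega), if_neg (by omega), zero_add]
          exact IH1 i hi
        · rw [hsplit, map_add, hkey r le_rfl, if_pos rfl]
          have hQr : coeff r (Q ^ r) = 1 := by
            rw [pow_congr_low hQ0 hr2 IH1 hr2 le_rfl, coeff_X_pow, if_pos rfl]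
          rw [hQr, mul_one, IH2]
          push_cast
          ring
  have := (claim N).2
  rw [hit] at this
  have hNc : (N : k) * c = 0 := by
    have h' := left_eq_add.mp this
    exact h'
  rcases mul_eq_zero.mp hNc with h | h
  · exact (Nat.cast_ne_zero (R := k)).mpr (by omega) h
  · exact hc h

-- chunk 10 : backward direction
lemma order_factor {F Ft W : PowerSeries k} {n d : ℕ} (hd : 1 ≤ d)
    (hF : F.order = (n : ℕ∞)) (hW : W.order = (d : ℕ∞)) (hfac : F = comp Ft W) :
    Ft.order = ((n / d : ℕ) : ℕ∞) := by
  have hW0 : constantCoeff W = 0 := constantCoeff_eq_zero_of_order hd hW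
  have hFt0 : Ft ≠ 0 := by
    rintro rfl
    rw [comp_zero_left] at hfac
    rw [hfac, order_eq_top.mpr rfl] at hF
    exact WithTop.coe_ne_top hF.symm
  have : Ft.order ≠ ⊤ := fun h => hFt0 (order_eq_top.mp h)
  obtain ⟨a, ha⟩ := WithTop.ne_top_iff_exists.mp this
  have hcomp := order_comp hW0 ha.symm hW
  rw [← hfac, hF] at hcomp
  have hn : n = a * d := by exact_mod_cast hcomp
  rw [hn, Nat.mul_div_cancel a (by omega)]
  exact_mod_cast ha.symm

lemma backward_core [CharZero k] {d : ℕ} (hd : 2 ≤ d) {ψ : PowerSeries k}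
    (hψord : ψ.order = (1 : ℕ∞)) (hitd : iterComp ψ d = X)
    (hstrict : ∀ j : ℕ, 0 < j → j < d → iterComp ψ j ≠ X) :
    ∃ W : PowerSeries k, W.order = (d : ℕ∞) ∧
      ∀ F : PowerSeries k, comp F ψ = F → ∃ Ft : PowerSeries k, F = comp Ft W := by
  obtain ⟨hψ0, hlam0⟩ := order_eq_one_iff.mp hψord
  set lam := coeff 1 ψ with hlam_def
  have hdk : (d : k) ≠ 0 := Nat.cast_ne_zero.mpr (by omega)
  have hlamd : lam ^ d = 1 := by
    have := coeff_one_iterComp hψ0 d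
    rw [hitd, coeff_X, if_pos rfl] at this
    exact this.symm
  have hlamj : ∀ j : ℕ, 0 < j → j < d → lam ^ j ≠ 1 := by
    intro j hj1 hj2 hone
    set φ := iterComp ψ j with hφ_def
    have hφ0 : constantCoeff φ = 0 := constantCoeff_iterComp' hψ0 j
    have hφ1 : coeff 1 φ = 1 := by rw [hφ_def, coeff_one_iterComp hψ0, ← hlam_def, hone]
    have hφd : iterComp φ d = X := by
      rw [hφ_def, ← iterComp_mul hψ0, mul_comm, iterComp_mul hψ0, hitd, iterComp_X]
    exact hstrict j hj1 hj2 (rigidity hφ0 hφ1 (by omega) hφd)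
  have hlamnd : ∀ j : ℕ, ¬ d ∣ j → lam ^ j ≠ 1 := by
    intro j hdvd
    have hmod := Nat.div_add_mod j d
    have hlt : j % d < d := Nat.mod_lt j (by omega)
    have hpos : 0 < j % d := Nat.pos_of_ne_zero (fun h => hdvd (Nat.dvd_of_mod_eq_zero h))
    have : lam ^ j = lam ^ (j % d) := by
      conv_lhs => rw [← hmod]
      rw [pow_add, pow_mul, hlamd, one_pow, one_mul]
    rw [this]
    exact hlamj _ hpos hlt
  set Tsum := ∑ j ∈ Finset.range d, C ((lam⁻¹) ^ j) * iterComp ψ j with hTsum_def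
  set T := C ((d : k))⁻¹ * Tsum with hT_def
  have hT0 : constantCoeff T = 0 := by
    rw [hT_def, map_mul, hTsum_def, map_sum]
    rw [Finset.sum_eq_zero (fun j _ => by
      rw [map_mul, constantCoeff_iterComp' hψ0 j, mul_zero]), mul_zero]
  have hT1 : coeff 1 T = 1 := by
    rw [hT_def, coeff_C_mul, hTsum_def, map_sum]
    rw [Finset.sum_congr rfl (fun j _ => by
      rw [coeff_C_mul, coeff_one_iterComp hψ0, ← hlam_def, ← mul_pow,
        inv_mul_cancel₀ hlam0, one_pow])]
    rw [Finset.sum_const, Finset.card_range, nsmul_eq_mul, mul_one, inv_mul_cancel₀ hdk]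
  have hconj : comp T ψ = C lam * T := by
    have hstep : comp Tsum ψ = C lam * Tsum := by
      set g : ℕ → PowerSeries k :=
        fun j => C lam * (C ((lam⁻¹) ^ j) * iterComp ψ j) with hg_def
      have h1 : comp Tsum ψ = ∑ j ∈ Finset.range d, g (j + 1) := by
        rw [hTsum_def, comp_sum]
        refine Finset.sum_congr rfl fun j _ => ?_
        rw [comp_mul hψ0, comp_C]
        have hcomp_it : comp (iterComp ψ j) ψ = iterComp ψ (j+1) := by
          rw [iterComp_add hψ0 j 1, iterComp_one]
        rw [hcomp_it]
        show C ((lam⁻¹)^j) * iterComp ψ (j+1)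
            = C lam * (C ((lam⁻¹)^(j+1)) * iterComp ψ (j+1))
        have harg : lam * (lam⁻¹)^(j+1) = (lam⁻¹)^j := by
          calc lam * (lam⁻¹)^(j+1) = (lam * lam⁻¹) * (lam⁻¹)^j := by rw [pow_succ]; ring
          _ = (lam⁻¹)^j := by rw [mul_inv_cancel₀ hlam0, one_mul]
        rw [← mul_assoc, ← map_mul, harg]
      have hgd : g d = g 0 := by
        show C lam * (C ((lam⁻¹)^d) * iterComp ψ d)
            = C lam * (C ((lam⁻¹)^0) * iterComp ψ 0)
        rw [hitd, pow_zero, show iterComp ψ 0 = X from rfl, inv_pow, hlamd, inv_one]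
      have hshift : ∑ j ∈ Finset.range d, g (j+1) = ∑ j ∈ Finset.range d, g j := by
        have e1 := Finset.sum_range_succ' g d
        have e2 := Finset.sum_range_succ g d
        rw [hgd] at e2
        exact add_right_cancel (e1.symm.trans e2)
      rw [h1, hshift, hg_def, ← Finset.mul_sum, ← hTsum_def]
    rw [hT_def, comp_mul hψ0, comp_C, hstep]
    ring
  obtain ⟨T', hT'0, hT'1, hTT', hT'T⟩ :=
    exists_comp_inverse hT0 (by rw [hT1]; exact one_ne_zero)
  have hXd0 : constantCoeff ((X : PowerSeries k) ^ d) = 0 := by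
    rw [map_pow, constantCoeff_X, zero_pow (by omega : d ≠ 0)]
  refine ⟨comp ((X : PowerSeries k) ^ d) T, ?_, ?_⟩
  · have hTord : T.order = ((1:ℕ) : ℕ∞) := by
      have := order_eq_one_iff.mpr ⟨hT0, by rw [hT1]; exact one_ne_zero⟩
      exact_mod_cast this
    have hXord : ((X : PowerSeries k) ^ d).order = ((d:ℕ) : ℕ∞) := by
      exact_mod_cast order_X_pow (R := k) d
    have := order_comp hT0 hXord hTord
    rw [this, Nat.mul_one]
  · intro F hF
    set F' := comp F T' with hF'_def
    have hCl0 : constantCoeff (C lam * X) = 0 := by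
      rw [map_mul, constantCoeff_X, mul_zero]
    have hF'T : comp F' T = F := by
      rw [hF'_def, comp_assoc hT'0 hT0, hT'T, comp_X_right]
    have hfix : comp F' (C lam * X) = F' := by
      have h2 : comp (comp F' (C lam * X)) T = comp F' T := by
        rw [comp_assoc hCl0 hT0, comp_smulX hT0, ← hconj, ← comp_assoc hT0 hψ0, hF'T, hF]
      calc comp F' (C lam * X)
          = comp (comp F' (C lam * X)) X := (comp_X_right _).symm
        _ = comp (comp F' (C lam * X)) (comp T T') := by rw [hTT']
        _ = comp (comp (comp F' (C lam * X)) T) T' := (comp_assoc hT0 hT'0).symm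
        _ = comp (comp F' T) T' := by rw [h2]
        _ = comp F' (comp T T') := comp_assoc hT0 hT'0
        _ = comp F' X := by rw [hTT']
        _ = F' := comp_X_right _
    have hvanish : ∀ j : ℕ, ¬ d ∣ j → coeff j F' = 0 := by
      intro j hdvd
      have hcoeff : coeff j (comp F' (C lam * X)) = coeff j F' * lam ^ j := by
        rw [coeff_comp, Finset.sum_eq_single j]
        · rw [mul_pow, ← map_pow, coeff_C_mul, coeff_X_pow, if_pos rfl, mul_one]
        · intro i hi hne
          rw [mul_pow, ← map_pow, coeff_C_mul, coeff_X_pow, if_neg (Ne.symm hne), mul_zero,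
            mul_zero]
        · intro h; exact absurd (Finset.mem_range.mpr (by omega)) h
      rw [hfix] at hcoeff
      by_contra hne
      have h3 : coeff j F' * 1 = coeff j F' * lam ^ j := by rw [mul_one]; exact hcoeff
      exact hlamnd j hdvd (mul_left_cancel₀ hne h3).symm
    set Ft := mk fun i => coeff (d * i) F' with hFt_def
    have hFtXd : comp Ft ((X : PowerSeries k) ^ d) = F' := by
      ext j
      rw [coeff_comp]
      by_cases hdj : d ∣ j
      · obtain ⟨i0, rfl⟩ := hdj
        rw [Finset.sum_eq_single i0]
        · rw [← pow_mul, coeff_X_pow, if_pos rfl, mul_one, hFt_def, coeff_mk]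
        · intro i hi hne
          rw [← pow_mul, coeff_X_pow,
            if_neg (fun h => hne (Nat.eq_of_mul_eq_mul_left (by omega) h).symm), mul_zero]
        · intro h
          exact absurd (Finset.mem_range.mpr
            (by have := Nat.le_mul_of_pos_left i0 (show 0 < d by omega); omega)) h
      · rw [Finset.sum_eq_zero (fun i hi => by
            rw [← pow_mul, coeff_X_pow, if_neg (fun h => hdj ⟨i, h⟩), mul_zero]),
          hvanish j hdj]
    refine ⟨Ft, ?_⟩
    rw [← hF'T, ← hFtXd, comp_assoc hXd0 hT0]


end Aux

theorem stmt13 {k : Type*} [Field k] [IsAlgClosed k] [CharZero k]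
    {n m d : ℕ} (hn : 2 ≤ n) (hm : 2 ≤ m) (hd : 2 ≤ d)
    (hdn : d ∣ n) (hdm : d ∣ m) (A B : PowerSeries k)
    (hA : A.order = (n : ℕ∞)) (hB : B.order = (m : ℕ∞)) :
    (∃ W At Bt : PowerSeries k, W.order = (d : ℕ∞) ∧ At.order = ((n / d : ℕ) : ℕ∞) ∧
        Bt.order = ((m / d : ℕ) : ℕ∞) ∧ A = comp At W ∧ B = comp Bt W) ↔
      ∃ ψ : PowerSeries k, ψ.order = 1 ∧ comp A ψ = A ∧ comp B ψ = B ∧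
        iterComp ψ d = X ∧ ∀ j : ℕ, 0 < j → j < d → iterComp ψ j ≠ X := by
  constructor
  · rintro ⟨W, At, Bt, hWo, hAto, hBto, hAeq, hBeq⟩
    obtain ⟨ψ, hψord, hWψ, hitd, hstrict⟩ := forward_dir hd hWo
    have hW0 : constantCoeff W = 0 := constantCoeff_eq_zero_of_order (by omega) hWo
    have hψ0 : constantCoeff ψ = 0 := (order_eq_one_iff.mp hψord).1
    refine ⟨ψ, hψord, ?_, ?_, hitd, hstrict⟩
    · rw [hAeq, comp_assoc hW0 hψ0, hWψ]
    · rw [hBeq, comp_assoc hW0 hψ0, hWψ]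
  · rintro ⟨ψ, hψord, hAψ, hBψ, hitd, hstrict⟩
    obtain ⟨W, hWord, hfac⟩ := backward_core hd hψord hitd hstrict
    obtain ⟨At, hAfac⟩ := hfac A hAψ
    obtain ⟨Bt, hBfac⟩ := hfac B hBψ
    exact ⟨W, At, Bt, hWord, order_factor (by omega) hA hWord hAfac,
      order_factor (by omega) hB hWord hBfac, hAfac, hBfac⟩
end
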